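/- Let (M,ρ) be a metric space and let τ be another topology on the set M. Assume f, g : M → ℝ are τ-continuous, that |∇f|(x) > |∇g|(x) for every x with |∇f|(x) ≠ 0, and that every sublevel set {x : f(x) ≤ c} is τ-compact. Then inf_M (f - g) = inf { f(x) - g(x) : x ∈ M, |∇f|(x) = 0 }. -/

import Mathlib

open Filter Topology ENNReal

/-- The positive part `[x]⁺` of an extended real, as an element of `ℝ≥0∞`. -/
noncomputable def erealPos (x : EReal) : ℝ≥0∞ := if x = ⊤ then ⊤ else ENNReal.ofReal x.toReal

/-- The global slope `|∇̃ f|(x) = sup_{y ≠ x} [f x - f y]⁺ / ρ(x,y)` of `f : M → ℝ ∪ {+∞}`. -/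
noncomputable def globalSlope {M : Type*} [MetricSpace M] (f : M → EReal) (x : M) : ℝ≥0∞ :=
  ⨆ y ∈ {y : M | y ≠ x}, erealPos (f x - f y) / edist x y

/-- The local slope `|∇ f|(x) = limsup_{y → x, y ≠ x} [f x - f y]⁺ / ρ(x,y)`. -/
noncomputable def localSlope {M : Type*} [MetricSpace M] (f : M → EReal) (x : M) : ℝ≥0∞ :=
  Filter.limsup (fun y => erealPos (f x - f y) / edist x y) (𝓝[≠] x)

/-- `ε`-global-critical points: `x ∈ dom f` with `f y ≥ f x - ε·ρ(y,x)` for all `y`. -/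
def epsCrit {M : Type*} [MetricSpace M] (ε : ℝ) (f : M → EReal) : Set M :=
  {x | f x ≠ ⊤ ∧ ∀ y, f x - ↑(ε * dist y x) ≤ f y}

lemma erealPos_coe_sub (a b : ℝ) : erealPos ((a : EReal) - b) = ENNReal.ofReal (a - b) := by
  rw [← EReal.coe_sub, erealPos, if_neg (EReal.coe_ne_top _), EReal.toReal_coe]

lemma descent {M : Type*} [MetricSpace M] (f g : M → ℝ) (x : M)
    (hlt : localSlope (fun y => (g y : EReal)) x < localSlope (fun y => (f y : EReal)) x) :
    ∃ y, f y < f x ∧ f y - g y < f x - g x := by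
  obtain ⟨t', hLt', ht'F⟩ := exists_between hlt
  obtain ⟨t, ht't, htF⟩ := exists_between ht'F
  have ht'0 : t' ≠ 0 := (lt_of_le_of_lt zero_le hLt').ne'
  have ht0 : t ≠ 0 := (lt_trans (lt_of_le_of_lt zero_le hLt') ht't).ne'
  have httop : t ≠ ⊤ := htF.ne_top
  have ht'top : t' ≠ ⊤ := ht't.ne_top
  have hge : ∀ᶠ y in 𝓝[≠] x, erealPos ((g x : EReal) - g y) / edist x y < t' :=
    eventually_lt_of_limsup_lt hLt'
  have hfe : ∃ᶠ y in 𝓝[≠] x, t < erealPos ((f x : EReal) - f y) / edist x y :=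
    frequently_lt_of_lt_limsup (by isBoundedDefault) htF
  have hne : ∀ᶠ y in 𝓝[≠] x, y ≠ x := eventually_mem_nhdsWithin
  obtain ⟨y, hyf, hyg, hyx⟩ := (hfe.and_eventually (hge.and hne)).exists
  rw [erealPos_coe_sub] at hyf hyg
  set d := edist x y with hd
  have hd0 : d ≠ 0 := by simpa [hd] using (edist_pos.2 (Ne.symm hyx)).ne'
  have hdtop : d ≠ ⊤ := edist_ne_top x y
  have hf' : t * d < ENNReal.ofReal (f x - f y) :=
    (ENNReal.lt_div_iff_mul_lt (Or.inl hd0) (Or.inl hdtop)).1 hyf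
  have hg' : ENNReal.ofReal (g x - g y) < t' * d :=
    (ENNReal.div_lt_iff (Or.inl hd0) (Or.inl hdtop)).1 hyg
  have hmultop : t * d ≠ ⊤ := ENNReal.mul_ne_top httop hdtop
  have hmultop' : t' * d ≠ ⊤ := ENNReal.mul_ne_top ht'top hdtop
  have hf'' : (t * d).toReal < f x - f y :=
    (ENNReal.lt_ofReal_iff_toReal_lt hmultop).1 hf'
  have h1 : g x - g y ≤ (ENNReal.ofReal (g x - g y)).toReal := by
    rw [ENNReal.toReal_ofReal']; exact le_max_left _ _
  have hg'' : g x - g y < (t' * d).toReal :=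
    lt_of_le_of_lt h1 ((ENNReal.toReal_lt_toReal ENNReal.ofReal_ne_top hmultop').2 hg')
  rw [ENNReal.toReal_mul] at hf'' hg''
  have hD : 0 < d.toReal := ENNReal.toReal_pos hd0 hdtop
  have htpos : 0 < t.toReal := ENNReal.toReal_pos ht0 httop
  have ht'le : t'.toReal ≤ t.toReal := ENNReal.toReal_mono httop ht't.le
  constructor
  case w => exact y
  constructor
  · nlinarith
  · nlinarith [mul_le_mul_of_nonneg_right ht'le hD.le]

/-- Daniilidis–Salas: if `f, g : M → ℝ` are continuous for an auxiliary
topology `τ`, `|∇f| > |∇g|` outside the critical set `{|∇f| = 0}` (slopes taken in the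
metric topology), and the sublevel sets of `f` are `τ`-compact, then
`inf (f - g) = inf_{0-crit f} (f - g)`. -/
theorem inf_sub_eq_inf_on_crit_of_compact_sublevels {M : Type*} [MetricSpace M]
    (τ : TopologicalSpace M) (f g : M → ℝ)
    (hf : Continuous[τ, _] f) (hg : Continuous[τ, _] g)
    (hslope : ∀ x, localSlope (fun y => (f y : EReal)) x ≠ 0 →
      localSlope (fun y => (g y : EReal)) x < localSlope (fun y => (f y : EReal)) x)
    (hcompact : ∀ c : ℝ, @IsCompact M τ {x | f x ≤ c}) :
    ⨅ x : M, ((f x - g x : ℝ) : EReal) =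
      ⨅ x ∈ {x | localSlope (fun y => (f y : EReal)) x = 0}, ((f x - g x : ℝ) : EReal) := by
  apply le_antisymm
  · exact le_iInf₂ fun x _ => iInf_le _ x
  · refine le_iInf fun x₀ => ?_
    set T : M → Set M := fun x => {y | f y ≤ f x ∧ f y - g y ≤ f x - g x} with hT
    have hTself : ∀ x, x ∈ T x := fun x => ⟨le_rfl, le_rfl⟩
    have hTtrans : ∀ {x y : M}, y ∈ T x → T y ⊆ T x := fun hy z hz =>
      ⟨hz.1.trans hy.1, hz.2.trans hy.2⟩
    have hTclosed : ∀ x, @IsClosed M τ (T x) := by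
      intro x
      have h1 : @IsClosed M τ (f ⁻¹' Set.Iic (f x)) := IsClosed.preimage hf isClosed_Iic
      have h2 : @IsClosed M τ ((fun y => f y - g y) ⁻¹' Set.Iic (f x - g x)) :=
        IsClosed.preimage (hf.sub hg) isClosed_Iic
      exact h1.inter h2
    have hTcompact : ∀ x, @IsCompact M τ (T x) := fun x =>
      IsCompact.of_isClosed_subset (hcompact (f x)) (hTclosed x) fun y hy => hy.1
    have hchainlb : ∀ c ⊆ T '' (T x₀), IsChain (· ⊆ ·) c → c.Nonempty →
        ∃ lb ∈ T '' (T x₀), ∀ s ∈ c, lb ⊆ s := by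
      intro c hcS hchain hcne
      haveI : Nonempty c := hcne.to_subtype
      have htd : Directed (· ⊇ ·) (fun s : c => (s : Set M)) := by
        intro a b
        rcases hchain.total a.2 b.2 with h | h
        · exact ⟨a, le_refl _, h⟩
        · exact ⟨b, h, le_refl _⟩
      have htn : ∀ s : c, (s : Set M).Nonempty := by
        rintro ⟨s, hs⟩
        obtain ⟨w, -, rfl⟩ := hcS hs
        exact ⟨w, hTself w⟩
      have htc : ∀ s : c, @IsCompact M τ (s : Set M) := by
        rintro ⟨s, hs⟩
        obtain ⟨w, -, rfl⟩ := hcS hs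
        exact hTcompact w
      have htcl : ∀ s : c, @IsClosed M τ (s : Set M) := by
        rintro ⟨s, hs⟩
        obtain ⟨w, -, rfl⟩ := hcS hs
        exact hTclosed w
      obtain ⟨z, hz⟩ := @IsCompact.nonempty_iInter_of_directed_nonempty_isCompact_isClosed
        M τ c _ (fun s : c => (s : Set M)) htd htn htc htcl
      simp only [Set.mem_iInter] at hz
      have hzx₀ : z ∈ T x₀ := by
        obtain ⟨s₀, hs₀⟩ := hcne
        obtain ⟨w, hw, rfl⟩ := hcS hs₀
        exact hTtrans hw (hz ⟨_, hs₀⟩)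
      refine ⟨T z, ⟨z, hzx₀, rfl⟩, fun s hs => ?_⟩
      obtain ⟨w, -, rfl⟩ := hcS hs
      exact hTtrans (hz ⟨_, hs⟩)
    obtain ⟨m, hmsub, hmem, hmin⟩ :
        ∃ m, m ⊆ T x₀ ∧ m ∈ T '' (T x₀) ∧ ∀ a ∈ T '' (T x₀), a ⊆ m → m ⊆ a := by
      obtain ⟨m, h1, h2⟩ := zorn_superset_nonempty (T '' (T x₀)) hchainlb (T x₀)
        ⟨x₀, hTself x₀, rfl⟩
      exact ⟨m, h1, h2.1, fun a ha hasub => h2.2 ha hasub⟩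
    obtain ⟨u, hux₀, rfl⟩ := hmem
    have hucrit : localSlope (fun y => (f y : EReal)) u = 0 := by
      by_contra h0
      obtain ⟨y, hyf, hyh⟩ := descent f g u (hslope u h0)
      have hyTu : y ∈ T u := ⟨hyf.le, hyh.le⟩
      have := hmin (T y) ⟨y, hTtrans hux₀ hyTu, rfl⟩ (hTtrans hyTu)
      exact absurd ((this (hTself u)).1) (not_le.2 hyf)
    have hle : f u - g u ≤ f x₀ - g x₀ := (hTself u).2.trans (hux₀.2)
    calc ⨅ x ∈ {x | localSlope (fun y => (f y : EReal)) x = 0}, ((f x - g x : ℝ) : EReal)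
        ≤ ((f u - g u : ℝ) : EReal) := iInf₂_le u hucrit
      _ ≤ _ := EReal.coe_le_coe_iff.2 hle
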